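/- Let C ∈ ℝ and A(t) = C/(2 e^{Ct} + 1). Then u(η,t) = e^{Ct} (log(tanh(η/2)) + 1) solves the hyperbolic Burgers-type equation ∂_t u - A(t) · sinh η ∂_η(u²) = (sinh η ∂_η)(sinh η ∂_η) u + A(t) u on (0,∞) × ℝ. -/

import Mathlib

lemma hasDerivAt_log_tanh_half {η : ℝ} (hη : 0 < η) :
    HasDerivAt (fun y : ℝ => Real.log (Real.tanh (y / 2))) (1 / Real.sinh η) η := by
  have h2 : (0:ℝ) < η / 2 := by linarith
  have hs : 0 < Real.sinh (η / 2) := Real.sinh_pos_iff.2 h2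
  have hc : 0 < Real.cosh (η / 2) := (Real.cosh_pos _)
  have hhalf : HasDerivAt (fun y : ℝ => y / 2) (1 / 2) η := by
    simpa using (hasDerivAt_id η).div_const 2
  have hsinh : HasDerivAt (fun y : ℝ => Real.sinh (y / 2))
      (Real.cosh (η / 2) * (1 / 2)) η :=
    (Real.hasDerivAt_sinh (η / 2)).comp (h := fun y : ℝ => y / 2) η hhalf
  have hcosh : HasDerivAt (fun y : ℝ => Real.cosh (y / 2))
      (Real.sinh (η / 2) * (1 / 2)) η :=
    (Real.hasDerivAt_cosh (η / 2)).comp (h := fun y : ℝ => y / 2) η hhalf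
  have hlogs : HasDerivAt (fun y : ℝ => Real.log (Real.sinh (y / 2)))
      (Real.cosh (η / 2) * (1 / 2) / Real.sinh (η / 2)) η :=
    hsinh.log hs.ne'
  have hlogc : HasDerivAt (fun y : ℝ => Real.log (Real.cosh (y / 2)))
      (Real.sinh (η / 2) * (1 / 2) / Real.cosh (η / 2)) η :=
    hcosh.log hc.ne'
  have hsub := hlogs.sub hlogc
  have hval : Real.cosh (η / 2) * (1 / 2) / Real.sinh (η / 2)
      - Real.sinh (η / 2) * (1 / 2) / Real.cosh (η / 2) = 1 / Real.sinh η := by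
    have hsη : Real.sinh η = 2 * Real.sinh (η / 2) * Real.cosh (η / 2) := by
      have h := Real.sinh_two_mul (η / 2)
      rwa [show 2 * (η / 2) = η by ring] at h
    have hpyth : Real.cosh (η / 2) ^ 2 - Real.sinh (η / 2) ^ 2 = 1 :=
      Real.cosh_sq_sub_sinh_sq _
    have hstep : Real.cosh (η / 2) * (1 / 2) / Real.sinh (η / 2)
        - Real.sinh (η / 2) * (1 / 2) / Real.cosh (η / 2)
        = (Real.cosh (η / 2) ^ 2 - Real.sinh (η / 2) ^ 2)
          / (2 * Real.sinh (η / 2) * Real.cosh (η / 2)) := by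
      field_simp
    rw [hstep, hpyth, hsη]
  have heq : ∀ᶠ y in nhds η, Real.log (Real.sinh (y / 2)) - Real.log (Real.cosh (y / 2))
      = Real.log (Real.tanh (y / 2)) := by
    filter_upwards [eventually_gt_nhds hη] with y hy
    have hs' : 0 < Real.sinh (y / 2) := Real.sinh_pos_iff.2 (by linarith)
    rw [Real.tanh_eq_sinh_div_cosh, Real.log_div hs'.ne' (Real.cosh_pos _).ne']
  rw [← hval]
  exact hsub.congr_of_eventuallyEq (by filter_upwards [heq] with y hy using hy.symm)

theorem hyperbolic_burgers_solution (C : ℝ) (A : ℝ → ℝ)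
    (hA : ∀ t, A t = C / (2 * Real.exp (C * t) + 1))
    (u : ℝ → ℝ → ℝ)
    (hu : ∀ η t, u η t = Real.exp (C * t) * (Real.log (Real.tanh (η / 2)) + 1)) :
    ∀ η : ℝ, 0 < η → ∀ t : ℝ,
      deriv (fun s : ℝ => u η s) t
          - A t * (Real.sinh η * deriv (fun y : ℝ => (u y t) ^ 2) η)
        = Real.sinh η * deriv (fun y : ℝ => Real.sinh y * deriv (fun z : ℝ => u z t) y) η
          + A t * u η t := by
  intro η hη t
  set E := Real.exp (C * t) with hE
  set K := Real.log (Real.tanh (η / 2)) + 1 with hK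
  -- time derivative
  have ht : deriv (fun s : ℝ => u η s) t = C * E * K := by
    have : (fun s : ℝ => u η s) = fun s => Real.exp (C * s) * K := by
      funext s; rw [hu]
    rw [this]
    have h1 : HasDerivAt (fun s : ℝ => Real.exp (C * s)) (Real.exp (C * t) * C) t := by
      have := (Real.hasDerivAt_exp (C * t)).comp (h := fun s : ℝ => C * s) t
        (by simpa using (hasDerivAt_id t).const_mul C)
      exact this
    have := (h1.mul_const K).deriv
    rw [this]; ring
  -- spatial derivative of u
  have hux : ∀ y : ℝ, 0 < y → HasDerivAt (fun z : ℝ => u z t) (E / Real.sinh y) y := by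
    intro y hy
    have : (fun z : ℝ => u z t) = fun z => E * (Real.log (Real.tanh (z / 2)) + 1) := by
      funext z; rw [hu]
    rw [this]
    have := ((hasDerivAt_log_tanh_half hy).add_const 1).const_mul E
    simpa [mul_one_div, div_eq_mul_inv] using this
  -- derivative of u^2
  have hsq : deriv (fun y : ℝ => (u y t) ^ 2) η = 2 * (E * K) * (E / Real.sinh η) := by
    have h := ((hux η hη).pow 2).deriv
    rw [show (fun y : ℝ => (u y t) ^ 2) = (fun z => u z t) ^ 2 from rfl, h, hu η t, ← hE, ← hK]
    push_cast
    ring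
  -- inner operator is constant E on (0,∞)
  have hconst : deriv (fun y : ℝ => Real.sinh y * deriv (fun z : ℝ => u z t) y) η = 0 := by
    have heq : (fun y : ℝ => Real.sinh y * deriv (fun z : ℝ => u z t) y)
        =ᶠ[nhds η] fun _ => E := by
      filter_upwards [eventually_gt_nhds hη] with y hy
      have hsy : Real.sinh y ≠ 0 := (Real.sinh_pos_iff.2 hy).ne'
      rw [(hux y hy).deriv]
      field_simp
    rw [heq.deriv_eq, deriv_const]
  rw [ht, hsq, hconst, hu, hA]
  have hsη : Real.sinh η ≠ 0 := (Real.sinh_pos_iff.2 hη).ne'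
  have hden : 2 * Real.exp (C * t) + 1 ≠ 0 := by positivity
  rw [← hE, ← hK]
  rw [← hE] at hden
  have hden' : 1 + E * 2 ≠ 0 := by rw [add_comm, mul_comm]; exact hden
  field_simp
  linear_combination (-(C * E * K)) * mul_inv_cancel₀ hden'
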